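/- Let p* be the maximum entropy distribution subject to matching itemset frequencies of a strictly positive empirical distribution q_D over a downward closed family F, and let q be any distribution in the exponential model associated with F with parameters r. Then log p*(D) − log q(D) = |D| · KL(p* ‖ q) ≥ 0, where KL denotes Kullback–Leibler divergence. -/
import Mathlib


open scoped Classical

/-- A family of itemsets is downward closed if it is closed under taking subsets. -/
def DownwardClosed {A : Type*} (F : Finset (Finset A)) : Prop :=
  ∀ X ∈ F, ∀ Y ⊆ X, Y ∈ F

variable {K : ℕ}

/-- The frequency of itemset `X` under distribution `p`: the probability that all
items of `X` take value `true`. -/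
noncomputable def freq (p : (Fin K → Bool) → ℝ) (X : Finset (Fin K)) : ℝ :=
  ∑ t ∈ Finset.univ.filter (fun t : Fin K → Bool => ∀ i ∈ X, t i = true), p t

/-- `p` is a probability distribution on `{0,1}^K`. -/
def IsDist (p : (Fin K → Bool) → ℝ) : Prop :=
  (∀ t, 0 ≤ p t) ∧ ∑ t, p t = 1

/-- The empirical distribution of a dataset `D`. -/
noncomputable def empirical (D : Multiset (Fin K → Bool)) : (Fin K → Bool) → ℝ :=
  fun t => (D.count t : ℝ) / (Multiset.card D : ℝ)

/-- The likelihood of a dataset `D` under distribution `p`. -/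
noncomputable def likelihood (p : (Fin K → Bool) → ℝ) (D : Multiset (Fin K → Bool)) : ℝ :=
  (D.map p).prod

/-- The (Shannon) entropy of a distribution. -/
noncomputable def entropyDist (p : (Fin K → Bool) → ℝ) : ℝ :=
  -∑ t, p t * Real.log (p t)

/-- Indicator `S_X(t)`: 1 if transaction `t` covers itemset `X`, else 0. -/
def ind (X : Finset (Fin K)) (t : Fin K → Bool) : ℝ :=
  if ∀ i ∈ X, t i = true then 1 else 0

/-- `p` has the exponential form associated with family `F`. -/
def ExpForm (F : Finset (Finset (Fin K))) (p : (Fin K → Bool) → ℝ) : Prop :=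
  ∃ r : Finset (Fin K) → ℝ, ∀ t, p t = Real.exp (∑ X ∈ F, r X * ind X t)

/-- The exponential model associated with `F`: distributions of exponential form
together with all their limits. -/
def ExpModel (F : Finset (Finset (Fin K))) : Set ((Fin K → Bool) → ℝ) :=
  closure {p | ExpForm F p}

/-- `p` matches the frequencies of `q` on every itemset of `F`. -/
def Matches (F : Finset (Finset (Fin K))) (p q : (Fin K → Bool) → ℝ) : Prop :=
  ∀ X ∈ F, freq p X = freq q X

/-- The marginal probability under `p` of observing the values of `t` on the
coordinates of `X`. -/
noncomputable def marg (p : (Fin K → Bool) → ℝ) (X : Finset (Fin K)) (t : Fin K → Bool) : ℝ :=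
  ∑ s ∈ Finset.univ.filter (fun s : Fin K → Bool => ∀ i ∈ X, s i = t i), p s

/-- The empirical entropy of an itemset `X` under distribution `q`. -/
noncomputable def entropyOf (q : (Fin K → Bool) → ℝ) (X : Finset (Fin K)) : ℝ :=
  -∑ u : {i // i ∈ X} → Bool,
      (marg q X fun i => if h : i ∈ X then u ⟨i, h⟩ else false) *
        Real.log (marg q X fun i => if h : i ∈ X then u ⟨i, h⟩ else false)

/-- Kullback–Leibler divergence. -/
noncomputable def KLdiv (p q : (Fin K → Bool) → ℝ) : ℝ :=
  ∑ t, p t * Real.log (p t / q t)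

lemma my_exp_prod (g : (Fin K → Bool) → ℝ) (D : Multiset (Fin K → Bool)) :
    (D.map (fun t => Real.exp (g t))).prod = Real.exp ((D.map g).sum) := by
  induction D using Multiset.induction with
  | empty => simp
  | cons a s ih => simp [ih, Real.exp_add]

lemma my_freq_eq (p : (Fin K → Bool) → ℝ) (X : Finset (Fin K)) :
    freq p X = ∑ t, p t * ind X t := by
  unfold freq ind
  rw [Finset.sum_filter]
  refine Finset.sum_congr rfl fun t _ => ?_
  split <;> simp

lemma my_key_sum (F : Finset (Finset (Fin K))) (r : Finset (Fin K) → ℝ)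
    (w : (Fin K → Bool) → ℝ) :
    ∑ t, w t * (∑ X ∈ F, r X * ind X t) = ∑ X ∈ F, r X * freq w X := by
  simp_rw [Finset.mul_sum]
  rw [Finset.sum_comm]
  refine Finset.sum_congr rfl fun X _ => ?_
  rw [my_freq_eq, Finset.mul_sum]
  refine Finset.sum_congr rfl fun t _ => by ring

lemma my_loglik (p g : (Fin K → Bool) → ℝ) (h : ∀ t, p t = Real.exp (g t))
    (D : Multiset (Fin K → Bool)) :
    Real.log (likelihood p D) = ∑ t, (D.count t : ℝ) * g t := by
  unfold likelihood
  rw [show D.map p = D.map (fun t => Real.exp (g t)) from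
    Multiset.map_congr rfl (fun t _ => h t), my_exp_prod, Real.log_exp]
  rw [Finset.sum_multiset_map_count]
  rw [← Finset.sum_subset (Finset.subset_univ D.toFinset)
    (fun t _ ht => by simp [Multiset.count_eq_zero_of_notMem (by simpa using ht)])]
  simp [nsmul_eq_mul]

/-- Theorem: let `p*` be the maximum entropy distribution (of exponential form, with
parameters `r*`) subject to matching the itemset frequencies of the strictly positive
empirical distribution over a downward closed family `F`, and let `q` be any distribution
of exponential form associated with `F`.  Then
`log p*(D) − log q(D) = |D| · KL(p* ‖ q) ≥ 0`. -/
theorem loglik_difference_is_kl (F : Finset (Finset (Fin K)))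
    (hdc : DownwardClosed F) (hsing : ∀ i : Fin K, ({i} : Finset (Fin K)) ∈ F)
    (D : Multiset (Fin K → Bool)) (hD : D ≠ 0)
    (hpos : ∀ t, 0 < empirical D t)
    (pstar : (Fin K → Bool) → ℝ)
    (hdist : IsDist pstar) (hmatch : Matches F pstar (empirical D))
    (hform : ExpForm F pstar)
    (hmaxent : ∀ p : (Fin K → Bool) → ℝ, IsDist p → Matches F p (empirical D) →
      entropyDist p ≤ entropyDist pstar)
    (q : (Fin K → Bool) → ℝ) (hq : IsDist q) (hqform : ExpForm F q) :
    Real.log (likelihood pstar D) - Real.log (likelihood q D) =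
        (Multiset.card D : ℝ) * KLdiv pstar q ∧
      0 ≤ KLdiv pstar q := by
  obtain ⟨r, hr⟩ := hform
  obtain ⟨s, hs⟩ := hqform
  have hNpos : (0 : ℝ) < (Multiset.card D : ℝ) := by
    have : D.card ≠ 0 := by simpa using hD
    positivity
  have hppos : ∀ t, 0 < pstar t := fun t => (hr t) ▸ Real.exp_pos _
  have hqpos : ∀ t, 0 < q t := fun t => (hs t) ▸ Real.exp_pos _
  -- count t = N * empirical D t
  have hcount : ∀ t, (D.count t : ℝ) = (Multiset.card D : ℝ) * empirical D t := by
    intro t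
    unfold empirical
    field_simp
  -- for any exponential parameters g, the D-log-likelihood equals N * ∑ pstar * g
  have main : ∀ (p : (Fin K → Bool) → ℝ) (rr : Finset (Fin K) → ℝ),
      (∀ t, p t = Real.exp (∑ X ∈ F, rr X * ind X t)) →
      Real.log (likelihood p D) =
        (Multiset.card D : ℝ) * ∑ t, pstar t * Real.log (p t) := by
    intro p rr hp
    rw [my_loglik p _ hp D]
    have h1 : ∑ t, (D.count t : ℝ) * (∑ X ∈ F, rr X * ind X t)
        = (Multiset.card D : ℝ) * ∑ t, empirical D t * (∑ X ∈ F, rr X * ind X t) := by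
      rw [Finset.mul_sum]
      refine Finset.sum_congr rfl fun t _ => by rw [hcount t]; ring
    have h3 : ∑ t, pstar t * Real.log (p t) = ∑ X ∈ F, rr X * freq pstar X := by
      rw [← my_key_sum]
      exact Finset.sum_congr rfl fun t _ => by rw [hp t, Real.log_exp]
    rw [h1, my_key_sum, h3]
    congr 1
    exact Finset.sum_congr rfl fun X hX => by rw [hmatch X hX]
  have hlogp := main pstar r hr
  have hlogq := main q s hs
  have hKL : KLdiv pstar q = ∑ t, pstar t * (Real.log (pstar t) - Real.log (q t)) := by
    unfold KLdiv
    refine Finset.sum_congr rfl fun t _ => ?_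
    rw [Real.log_div (hppos t).ne' (hqpos t).ne']
  constructor
  · rw [hlogp, hlogq, hKL, ← mul_sub, ← Finset.sum_sub_distrib]
    congr 1
    refine Finset.sum_congr rfl fun t _ => by ring
  · have hub : ∀ t : Fin K → Bool,
        pstar t * (Real.log (q t) - Real.log (pstar t)) ≤ q t - pstar t := by
      intro t
      have h1 : Real.log (q t) - Real.log (pstar t) = Real.log (q t / pstar t) := by
        rw [Real.log_div (hqpos t).ne' (hppos t).ne']
      rw [h1]
      have h2 := Real.log_le_sub_one_of_pos (div_pos (hqpos t) (hppos t))
      calc pstar t * Real.log (q t / pstar t)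
          ≤ pstar t * (q t / pstar t - 1) :=
            mul_le_mul_of_nonneg_left h2 (hppos t).le
        _ = q t - pstar t := by
            rw [mul_sub, mul_one, mul_div_cancel₀ _ (hppos t).ne']
    have hsum : ∑ t, pstar t * (Real.log (q t) - Real.log (pstar t)) ≤ 0 := by
      calc ∑ t, pstar t * (Real.log (q t) - Real.log (pstar t))
          ≤ ∑ t, (q t - pstar t) := Finset.sum_le_sum fun t _ => hub t
        _ = 0 := by rw [Finset.sum_sub_distrib, hq.2, hdist.2, sub_self]
    rw [hKL]
    have : ∑ t, pstar t * (Real.log (pstar t) - Real.log (q t))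
        = -∑ t, pstar t * (Real.log (q t) - Real.log (pstar t)) := by
      rw [← Finset.sum_neg_distrib]
      exact Finset.sum_congr rfl fun t _ => by ring
    rw [this]
    linarith
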